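/- The map Z_𝒜 : ℋ¹ → 𝒜 is a homomorphism for the harmonic product: Z_𝒜(w * w') = Z_𝒜(w) · Z_𝒜(w') for all w, w' ∈ ℋ¹. -/

import Mathlib

open scoped BigOperators

/-- The product of `ℤ/pℤ` over all primes `p`. -/
abbrev PreA : Type := ∀ p : Nat.Primes, ZMod p

/-- The ideal of families that vanish for all but finitely many primes. -/
def nullIdeal : Ideal PreA where
  carrier := {f | {p | f p ≠ 0}.Finite}
  zero_mem' := by simp
  add_mem' := by
    intro f g hf hg
    refine (hf.union hg).subset fun p hp => ?_
    by_contra hc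
    simp only [Set.mem_union, Set.mem_setOf_eq, not_or, not_not] at hc
    exact hp (by simp [Set.mem_setOf_eq, hc.1, hc.2])
  smul_mem' := by
    intro c f hf
    refine hf.subset fun p hp => ?_
    simp only [Set.mem_setOf_eq] at hp ⊢
    intro h0
    exact hp (by simp [h0])

/-- The ring `𝒜 = (∏_p ℤ/pℤ)/(⊕_p ℤ/pℤ)`. -/
abbrev A : Type := PreA ⧸ nullIdeal

/-- `zetaSum p ks b` is `∑_{b > m₁ > ⋯ > m_n ≥ 1} ∏ mᵢ^{-kᵢ}` in `ℤ/pℤ`. -/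
def zetaSum (p : ℕ) : List ℕ → ℕ → ZMod p
  | [], _ => 1
  | k :: ks, b => ∑ m ∈ Finset.Ico 1 b, ((m : ZMod p)⁻¹) ^ k * zetaSum p ks m

/-- `zetaStarSum p ks b` is `∑_{b > m₁ ≥ ⋯ ≥ m_n ≥ 1} ∏ mᵢ^{-kᵢ}` in `ℤ/pℤ`. -/
def zetaStarSum (p : ℕ) : List ℕ → ℕ → ZMod p
  | [], _ => 1
  | k :: ks, b => ∑ m ∈ Finset.Ico 1 b, ((m : ZMod p)⁻¹) ^ k * zetaStarSum p ks (m + 1)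

/-- The finite multiple zeta value `ζ_𝒜(k₁,…,k_n)`. -/
def zetaA (ks : List ℕ) : A :=
  Ideal.Quotient.mk nullIdeal (fun p => zetaSum p ks p)

/-- The finite multiple zeta-star value `ζ⋆_𝒜(k₁,…,k_n)`. -/
def zetaStarA (ks : List ℕ) : A :=
  Ideal.Quotient.mk nullIdeal (fun p => zetaStarSum p ks p)

/-- `ℋ¹ = ℚ⟨z₁,z₂,…⟩`, the noncommutative polynomial algebra on variables `z_k`, `k ≥ 1`. -/
abbrev H1 : Type := MonoidAlgebra ℚ (FreeMonoid ℕ+)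

/-- The monomial (word) `z_{k₁} ⋯ z_{k_n}` in `ℋ¹`. -/
noncomputable def word (w : List ℕ+) : H1 :=
  MonoidAlgebra.of ℚ (FreeMonoid ℕ+) (FreeMonoid.ofList w)

/-- Shuffle product on words (with values in `ℋ¹`). -/
noncomputable def shuffleW : List ℕ+ → List ℕ+ → H1
  | [], w => word w
  | v, [] => word v
  | k :: v, l :: w => word [k] * shuffleW v (l :: w) + word [l] * shuffleW (k :: v) w
  termination_by v w => v.length + w.length
  decreasing_by all_goals first | (simp; omega) | simp | omega

/-- The shuffle product `ш` on `ℋ¹`, as the bilinear extension of `shuffleW`. -/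
noncomputable def shuffle (x y : H1) : H1 :=
  Finsupp.sum x.coeff fun v c => Finsupp.sum y.coeff fun w c' =>
    (c * c') • shuffleW (FreeMonoid.toList v) (FreeMonoid.toList w)

/-- Harmonic product on words (with values in `ℋ¹`). -/
noncomputable def harmW : List ℕ+ → List ℕ+ → H1
  | [], w => word w
  | v, [] => word v
  | k :: v, l :: w =>
      word [k] * harmW v (l :: w) + word [l] * harmW (k :: v) w
        + word [k + l] * harmW v w
  termination_by v w => v.length + w.length
  decreasing_by all_goals first | (simp; omega) | simp | omega

/-- The harmonic product `*` on `ℋ¹`, as the bilinear extension of `harmW`. -/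
noncomputable def harm (x y : H1) : H1 :=
  Finsupp.sum x.coeff fun v c => Finsupp.sum y.coeff fun w c' =>
    (c * c') • harmW (FreeMonoid.toList v) (FreeMonoid.toList w)

/-- Star-harmonic product on words (with values in `ℋ¹`). -/
noncomputable def harmStarW : List ℕ+ → List ℕ+ → H1
  | [], w => word w
  | v, [] => word v
  | k :: v, l :: w =>
      word [k] * harmStarW v (l :: w) + word [l] * harmStarW (k :: v) w
        - word [k + l] * harmStarW v w
  termination_by v w => v.length + w.length
  decreasing_by all_goals first | (simp; omega) | simp | omega

/-- The product `∗̄` on `ℋ¹`, as the bilinear extension of `harmStarW`. -/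
noncomputable def harmStar (x y : H1) : H1 :=
  Finsupp.sum x.coeff fun v c => Finsupp.sum y.coeff fun w c' =>
    (c * c') • harmStarW (FreeMonoid.toList v) (FreeMonoid.toList w)

/-- The image of a rational number in `𝒜`. -/
def ratA (q : ℚ) : A :=
  Ideal.Quotient.mk nullIdeal (fun p => (q.num : ZMod p) * ((q.den : ZMod p))⁻¹)

/-- The `ℚ`-linear map `Z_𝒜 : ℋ¹ → 𝒜` sending `z_{k₁} ⋯ z_{k_n}` to `ζ_𝒜(k₁,…,k_n)`. -/
noncomputable def ZA (x : H1) : A :=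
  Finsupp.sum x.coeff fun w c => ratA c * zetaA ((FreeMonoid.toList w).map (fun k => (k : ℕ)))

/-- The `ℚ`-linear map `Z̄_𝒜 : ℋ¹ → 𝒜` sending `z_{k₁} ⋯ z_{k_n}` to `ζ⋆_𝒜(k₁,…,k_n)`. -/
noncomputable def ZSA (x : H1) : A :=
  Finsupp.sum x.coeff fun w c => ratA c * zetaStarA ((FreeMonoid.toList w).map (fun k => (k : ℕ)))

/-- Sum of a list of positive integers (equal to the actual sum for nonempty lists). -/
def psum : List ℕ+ → ℕ+
  | [] => 1
  | k :: t => t.foldl (· + ·) k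

/-- The map `d` on words: `d(z_{k₁}⋯z_{k_n}) = ∑_{m} ∑_{0=i₀<⋯<i_m=n}
`z_{k_{i₀+1}+⋯+k_{i₁}} ⋯ z_{k_{i_{m-1}+1}+⋯+k_{i_m}}`. -/
noncomputable def dW (w : List ℕ+) : H1 :=
  ∑ c : Composition w.length, word ((w.splitWrtComposition c).map psum)

/-- `z_a` for a tuple `a = (a₁,…,a_m; b₁,…,b_m; c₁,…,c_n) ∈ I_{m,n}`:
`∑_{σ,τ ∈ S_m} z_{a_{σ(1)}} z_{b_{τ(1)}} ⋯ z_{a_{σ(m)}} z_{b_{τ(m)}} ш z_{c₁} ш ⋯ ш z_{c_n}`. -/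
noncomputable def zTuple {m n : ℕ} (a b : Fin m → ℕ+) (c : Fin n → ℕ+) : H1 :=
  ∑ σ : Equiv.Perm (Fin m), ∑ τ : Equiv.Perm (Fin m),
    (List.ofFn c).foldl (fun w k => shuffle w (word [k]))
      (word ((List.ofFn (fun i => [a (σ i), b (τ i)])).flatten))

/-- The statement `P_{m,n}`: `Z_𝒜(z_a) = Z̄_𝒜(z_a) = 0` for all `a ∈ I_{m,n}`. -/
def Pmn (m n : ℕ) : Prop :=
  ∀ (a b : Fin m → ℕ+) (c : Fin n → ℕ+),
    (∀ i, Odd (a i : ℕ)) → (∀ i, Odd (b i : ℕ)) → (∀ j, Even (c j : ℕ)) →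
    ZA (zTuple a b c) = 0 ∧ ZSA (zTuple a b c) = 0

/-- The list `{c}^{n₀}, a, {c}^{n₁}, b, {c}^{n₂}, …, a, {c}^{n_{2m-1}}, b, {c}^{n_{2m}}`. -/
def bbList (a b c : ℕ) (m : ℕ) (f : Fin (2 * m + 1) → ℕ) : List ℕ :=
  (List.ofFn (fun j : Fin m =>
      List.replicate (f ⟨2 * j.val, by have := j.isLt; omega⟩) c ++ [a]
        ++ List.replicate (f ⟨2 * j.val + 1, by have := j.isLt; omega⟩) c ++ [b])).flatten
    ++ List.replicate (f ⟨2 * m, by omega⟩) c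

instance factPrime (p : Nat.Primes) : Fact (Nat.Prime (p : ℕ)) := ⟨p.2⟩

lemma mem_nullIdeal_iff {f : PreA} : f ∈ nullIdeal ↔ {p | f p ≠ 0}.Finite := Iff.rfl

lemma finite_bad (d : ℕ) (hd : d ≠ 0) :
    {p : Nat.Primes | (d : ZMod p) = 0}.Finite := by
  have hsub : {p : Nat.Primes | (d : ZMod p) = 0}
      ⊆ (fun p : Nat.Primes => (p : ℕ)) ⁻¹' Set.Iic d := by
    intro p hp
    haveI : NeZero ((p : ℕ)) := ⟨p.2.pos.ne'⟩
    rw [Set.mem_setOf_eq, ZMod.natCast_eq_zero_iff] at hp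
    exact Nat.le_of_dvd (Nat.pos_of_ne_zero hd) hp
  exact (Set.Finite.preimage (Set.injOn_of_injective (fun a b h => Subtype.ext h))
    (Set.finite_Iic d)).subset hsub

lemma num_cast_eq (q : ℚ) : (q.num : ℚ) = q * q.den := by
  have dq : ((q.den : ℚ)) ≠ 0 := Nat.cast_ne_zero.mpr q.den_nz
  exact (div_eq_iff dq).1 (Rat.num_div_den q)

lemma ratA_zero : ratA 0 = 0 := by
  rw [ratA]
  have : (fun p : Nat.Primes => (((0:ℚ).num : ZMod p)) * (((0:ℚ).den : ZMod p))⁻¹)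
      = (0 : PreA) := by
    funext p; simp
  rw [this, map_zero]

lemma ratA_add (q r : ℚ) : ratA (q + r) = ratA q + ratA r := by
  rw [ratA, ratA, ratA, ← map_add, Ideal.Quotient.eq, mem_nullIdeal_iff]
  have keyQ : (((q + r).num : ℚ)) * (q.den * r.den)
      = (q.num * r.den + r.num * q.den) * ((q + r).den) := by
    rw [num_cast_eq (q + r)]
    push_cast [num_cast_eq q, num_cast_eq r]
    ring
  have keyZ : ((q + r).num) * ((q.den : ℤ) * (r.den : ℤ))
      = ((q.num : ℤ) * r.den + r.num * q.den) * ((q + r).den : ℤ) := by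
    exact_mod_cast keyQ
  refine (((finite_bad q.den q.den_nz).union (finite_bad r.den r.den_nz)).union
    (finite_bad (q + r).den (q + r).den_nz)).subset ?_
  intro p hp
  by_contra hc
  simp only [Set.mem_union, Set.mem_setOf_eq, not_or] at hc
  obtain ⟨⟨hq, hr⟩, hs⟩ := hc
  apply hp
  haveI : Fact (Nat.Prime (p : ℕ)) := ⟨p.2⟩
  have keyp : (((q + r).num : ZMod p)) * ((q.den : ZMod p) * (r.den : ZMod p))
      = ((q.num : ZMod p) * (r.den : ZMod p) + (r.num : ZMod p) * (q.den : ZMod p))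
        * ((q + r).den : ZMod p) := by
    have := congrArg (fun z : ℤ => (z : ZMod p)) keyZ
    push_cast at this
    exact this
  simp only [Set.mem_setOf_eq, Pi.sub_apply, Pi.add_apply, not_not, sub_eq_zero]
  field_simp
  linear_combination keyp

lemma ratA_mul (q r : ℚ) : ratA (q * r) = ratA q * ratA r := by
  rw [ratA, ratA, ratA, ← map_mul, Ideal.Quotient.eq, mem_nullIdeal_iff]
  have keyQ : (((q * r).num : ℚ)) * (q.den * r.den)
      = (q.num * r.num) * ((q * r).den) := by
    rw [num_cast_eq (q * r)]
    push_cast [num_cast_eq q, num_cast_eq r]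
    ring
  have keyZ : ((q * r).num) * ((q.den : ℤ) * (r.den : ℤ))
      = ((q.num : ℤ) * r.num) * ((q * r).den : ℤ) := by
    exact_mod_cast keyQ
  refine (((finite_bad q.den q.den_nz).union (finite_bad r.den r.den_nz)).union
    (finite_bad (q * r).den (q * r).den_nz)).subset ?_
  intro p hp
  by_contra hc
  simp only [Set.mem_union, Set.mem_setOf_eq, not_or] at hc
  obtain ⟨⟨hq, hr⟩, hs⟩ := hc
  apply hp
  haveI : Fact (Nat.Prime (p : ℕ)) := ⟨p.2⟩
  have keyp : (((q * r).num : ZMod p)) * ((q.den : ZMod p) * (r.den : ZMod p))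
      = ((q.num : ZMod p) * (r.num : ZMod p)) * ((q * r).den : ZMod p) := by
    have := congrArg (fun z : ℤ => (z : ZMod p)) keyZ
    push_cast at this
    exact this
  simp only [Set.mem_setOf_eq, Pi.sub_apply, Pi.mul_apply, not_not, sub_eq_zero]
  field_simp
  linear_combination keyp

lemma ZA_single (w : FreeMonoid ℕ+) (c : ℚ) :
    ZA (MonoidAlgebra.single w c)
      = ratA c * zetaA ((FreeMonoid.toList w).map (fun k => (k : ℕ))) := by
  rw [ZA, MonoidAlgebra.coeff_single]
  exact Finsupp.sum_single_index (by rw [ratA_zero, zero_mul])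

lemma ZA_add (x y : H1) : ZA (x + y) = ZA x + ZA y := by
  rw [ZA, ZA, ZA, MonoidAlgebra.coeff_add]
  exact Finsupp.sum_add_index' (fun w => by rw [ratA_zero, zero_mul])
    (fun w c c' => by rw [ratA_add, add_mul])

/-- `ZA` bundled as an additive monoid hom. -/
noncomputable def ZAhom : H1 →+ A := AddMonoidHom.mk' ZA ZA_add

lemma ZA_zero : ZA 0 = 0 := map_zero ZAhom

lemma ZA_smul (c : ℚ) (x : H1) : ZA (c • x) = ratA c * ZA x := by
  induction x using MonoidAlgebra.induction_linear with
  | zero => rw [smul_zero, ZA_zero, mul_zero]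
  | add f g hf hg => rw [smul_add, ZA_add, ZA_add, hf, hg, mul_add]
  | single w d =>
      rw [MonoidAlgebra.smul_single, smul_eq_mul]
      rw [ZA_single, ZA_single, ratA_mul, mul_assoc]

/-- Integer-coefficient version of `ℋ¹`. -/
abbrev HZ : Type := MonoidAlgebra ℤ (FreeMonoid ℕ+)

/-- Integer-coefficient words. -/
noncomputable def wordZ (l : List ℕ+) : HZ :=
  MonoidAlgebra.of ℤ (FreeMonoid ℕ+) (FreeMonoid.ofList l)

/-- Integer-coefficient harmonic product on words. -/
noncomputable def harmZ : List ℕ+ → List ℕ+ → HZ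
  | [], w => wordZ w
  | v, [] => wordZ v
  | k :: v, l :: w =>
      wordZ [k] * harmZ v (l :: w) + wordZ [l] * harmZ (k :: v) w
        + wordZ [k + l] * harmZ v w
  termination_by v w => v.length + w.length
  decreasing_by all_goals first | (simp; omega) | simp | omega

/-- The coefficient-cast map `HZ → ℋ¹`. -/
noncomputable def iota : HZ →ₐ[ℤ] H1 :=
  MonoidAlgebra.lift ℤ H1 (FreeMonoid ℕ+) (MonoidAlgebra.of ℚ (FreeMonoid ℕ+))

lemma iota_single (w : FreeMonoid ℕ+) (c : ℤ) :
    iota (MonoidAlgebra.single w c) = MonoidAlgebra.single w (c : ℚ) := by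
  rw [iota, MonoidAlgebra.lift_single, MonoidAlgebra.of_apply, MonoidAlgebra.smul_single]
  norm_num

lemma iota_wordZ (l : List ℕ+) : iota (wordZ l) = word l := by
  rw [wordZ, word, MonoidAlgebra.of_apply, MonoidAlgebra.of_apply, iota_single]
  norm_num

lemma harmW_eq_iota : ∀ (n : ℕ) (v w : List ℕ+), v.length + w.length ≤ n →
    harmW v w = iota (harmZ v w) := by
  intro n
  induction n with
  | zero =>
      intro v w h
      obtain ⟨rfl, rfl⟩ : v = [] ∧ w = [] := by
        constructor <;> (cases v <;> cases w <;> simp_all)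
      rw [harmW, harmZ, iota_wordZ]
  | succ n ih =>
      intro v w h
      match v, w with
      | [], w => rw [harmW, harmZ, iota_wordZ]
      | (k :: v), [] =>
          have h1 : harmW (k :: v) [] = word (k :: v) := by simp [harmW]
          have h2 : harmZ (k :: v) [] = wordZ (k :: v) := by simp [harmZ]
          rw [h1, h2, iota_wordZ]
      | (k :: v), (l :: w) =>
          simp only [List.length_cons] at h
          rw [harmW, harmZ, map_add, map_add, map_mul, map_mul, map_mul,
            iota_wordZ, iota_wordZ, iota_wordZ,
            ih v (l :: w) (by simp; omega), ih (k :: v) w (by simp; omega),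
            ih v w (by omega)]

/-- Truncated evaluation map on `HZ`. -/
noncomputable def evpZ (p : Nat.Primes) (b : ℕ) : HZ →+ ZMod p :=
  (Finsupp.liftAddHom fun w : FreeMonoid ℕ+ =>
    (AddMonoidHom.mulRight
        (zetaSum p ((FreeMonoid.toList w).map (fun k => (k : ℕ))) b)).comp
      (Int.castAddHom (ZMod p))).comp MonoidAlgebra.coeffAddEquiv.toAddMonoidHom

lemma evpZ_single (p : Nat.Primes) (b : ℕ) (w : FreeMonoid ℕ+) (c : ℤ) :
    evpZ p b (MonoidAlgebra.single w c)
      = (c : ZMod p) * zetaSum p ((FreeMonoid.toList w).map (fun k => (k : ℕ))) b := by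
  unfold evpZ
  rw [AddMonoidHom.comp_apply]
  erw [Finsupp.liftAddHom_apply_single]
  simp

lemma evpZ_word (p : Nat.Primes) (b : ℕ) (l : List ℕ+) :
    evpZ p b (wordZ l) = zetaSum p (l.map (fun k => (k : ℕ))) b := by
  rw [wordZ, MonoidAlgebra.of_apply, evpZ_single]
  norm_num

lemma evpZ_word_mul (p : Nat.Primes) (b : ℕ) (k : ℕ+) (x : HZ) :
    evpZ p b (wordZ [k] * x)
      = ∑ m ∈ Finset.Ico 1 b, ((m : ZMod p)⁻¹) ^ (k : ℕ) * evpZ p m x := by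
  induction x using MonoidAlgebra.induction_linear with
  | zero => simp
  | add f g hf hg =>
      rw [mul_add, map_add, hf, hg, ← Finset.sum_add_distrib]
      simp [map_add, mul_add]
  | single w d =>
      have h1 : wordZ [k] * MonoidAlgebra.single w d
          = MonoidAlgebra.single (FreeMonoid.ofList [k] * w) d := by
        rw [wordZ, MonoidAlgebra.of_apply, MonoidAlgebra.single_mul_single, one_mul]
      rw [h1, evpZ_single]
      have h2 : FreeMonoid.toList (FreeMonoid.ofList [k] * w) = k :: FreeMonoid.toList w := by
        simp [FreeMonoid.toList_mul]
      rw [h2,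
        show ((k :: FreeMonoid.toList w).map (fun k => (k : ℕ)))
          = (k : ℕ) :: (FreeMonoid.toList w).map (fun k => (k : ℕ)) from rfl,
        zetaSum, Finset.mul_sum]
      refine Finset.sum_congr rfl fun m _ => ?_
      rw [evpZ_single]
      ring

lemma sum_mul_sum_Ico {R : Type*} [CommRing R] (b : ℕ) (f g : ℕ → R) :
    (∑ m ∈ Finset.Ico 1 b, f m) * (∑ n ∈ Finset.Ico 1 b, g n)
      = ∑ m ∈ Finset.Ico 1 b, f m * (∑ n ∈ Finset.Ico 1 m, g n)
        + ∑ n ∈ Finset.Ico 1 b, (∑ m ∈ Finset.Ico 1 n, f m) * g n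
        + ∑ m ∈ Finset.Ico 1 b, f m * g m := by
  induction b with
  | zero => simp
  | succ b ih =>
      rcases Nat.eq_zero_or_pos b with hb | hb
      · subst hb; simp
      · rw [Finset.sum_Ico_succ_top hb, Finset.sum_Ico_succ_top hb,
          Finset.sum_Ico_succ_top hb (f := fun m => f m * (∑ n ∈ Finset.Ico 1 m, g n)),
          Finset.sum_Ico_succ_top hb (f := fun n => (∑ m ∈ Finset.Ico 1 n, f m) * g n),
          Finset.sum_Ico_succ_top hb (f := fun m => f m * g m)]
        ring_nf
        ring_nf at ih
        linear_combination ih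

lemma harmZ_key (p : Nat.Primes) :
    ∀ (n : ℕ) (v w : List ℕ+), v.length + w.length ≤ n → ∀ b : ℕ,
      evpZ p b (harmZ v w)
        = zetaSum p (v.map (fun k => (k : ℕ))) b
          * zetaSum p (w.map (fun k => (k : ℕ))) b := by
  intro n
  induction n with
  | zero =>
      intro v w h b
      obtain ⟨rfl, rfl⟩ : v = [] ∧ w = [] := by
        constructor <;> (cases v <;> cases w <;> simp_all)
      rw [harmZ, evpZ_word]
      simp [zetaSum]
  | succ n ih =>
      intro v w h b
      match v, w with
      | [], w =>
          rw [harmZ, evpZ_word]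
          simp [zetaSum]
      | (k :: v), [] =>
          have h2 : harmZ (k :: v) [] = wordZ (k :: v) := by simp [harmZ]
          rw [h2, evpZ_word]
          simp [zetaSum]
      | (k :: v), (l :: w) =>
          rw [harmZ, map_add, map_add, evpZ_word_mul, evpZ_word_mul, evpZ_word_mul]
          simp only [List.length_cons] at h
          have ih1 : ∀ m, evpZ p m (harmZ v (l :: w))
              = zetaSum p (v.map (fun k => (k : ℕ))) m
                * zetaSum p ((l :: w).map (fun k => (k : ℕ))) m :=
            fun m => ih v (l :: w) (by simp; omega) m
          have ih2 : ∀ m, evpZ p m (harmZ (k :: v) w)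
              = zetaSum p ((k :: v).map (fun k => (k : ℕ))) m
                * zetaSum p (w.map (fun k => (k : ℕ))) m :=
            fun m => ih (k :: v) w (by simp; omega) m
          have ih3 : ∀ m, evpZ p m (harmZ v w)
              = zetaSum p (v.map (fun k => (k : ℕ))) m
                * zetaSum p (w.map (fun k => (k : ℕ))) m :=
            fun m => ih v w (by omega) m
          simp only [ih1, ih2, ih3]
          rw [show ((k :: v).map (fun k => (k : ℕ)))
              = (k : ℕ) :: v.map (fun k => (k : ℕ)) from rfl,
            show ((l :: w).map (fun k => (k : ℕ)))
              = (l : ℕ) :: w.map (fun k => (k : ℕ)) from rfl,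
            zetaSum, zetaSum,
            sum_mul_sum_Ico b
              (fun m => ((m : ZMod p)⁻¹) ^ (k : ℕ) * zetaSum p (v.map (fun k => (k : ℕ))) m)
              (fun m => ((m : ZMod p)⁻¹) ^ (l : ℕ) * zetaSum p (w.map (fun k => (k : ℕ))) m)]
          have hkl : ((k + l : ℕ+) : ℕ) = (k : ℕ) + (l : ℕ) := by simp
          rw [hkl]
          congr 1
          · congr 1
            · refine Finset.sum_congr rfl fun m _ => ?_
              rw [zetaSum]; ring
            · refine Finset.sum_congr rfl fun m _ => ?_
              rw [zetaSum]; ring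
          · refine Finset.sum_congr rfl fun m _ => ?_
            rw [pow_add]; ring

lemma ZA_iota (z : HZ) :
    ZA (iota z) = Ideal.Quotient.mk nullIdeal (fun p => evpZ p p z) := by
  induction z using MonoidAlgebra.induction_linear with
  | zero =>
      rw [map_zero, ZA_zero]
      have : (fun p : Nat.Primes => evpZ p p (0 : HZ)) = (0 : PreA) := by
        funext p; rw [map_zero]; rfl
      rw [this, map_zero]
  | add f g hf hg =>
      rw [map_add, ZA_add, hf, hg, ← map_add]
      congr 1
      funext p
      rw [Pi.add_apply, map_add]
  | single w c =>
      rw [iota_single, ZA_single, ratA, zetaA, ← map_mul]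
      congr 1
      funext p
      rw [Pi.mul_apply, evpZ_single]
      congr 1
      rw [Rat.num_intCast, Rat.den_intCast]
      norm_num

lemma ZA_harmW (v w : List ℕ+) :
    ZA (harmW v w)
      = zetaA (v.map (fun k => (k : ℕ))) * zetaA (w.map (fun k => (k : ℕ))) := by
  rw [harmW_eq_iota (v.length + w.length) v w le_rfl, ZA_iota, zetaA, zetaA, ← map_mul]
  congr 1
  funext p
  rw [Pi.mul_apply]
  exact harmZ_key p (v.length + w.length) v w le_rfl p

/-- `Z_𝒜` is a homomorphism for the harmonic product `*`. -/
theorem ZA_harm (w w' : H1) : ZA (harm w w') = ZA w * ZA w' := by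
  rw [harm]
  have e1 : ZA (Finsupp.sum w.coeff fun v c => Finsupp.sum w'.coeff fun u c' =>
      (c * c') • harmW (FreeMonoid.toList v) (FreeMonoid.toList u))
      = Finsupp.sum w.coeff fun v c => Finsupp.sum w'.coeff fun u c' =>
          ratA c * zetaA ((FreeMonoid.toList v).map (fun k => (k : ℕ)))
            * (ratA c' * zetaA ((FreeMonoid.toList u).map (fun k => (k : ℕ)))) := by
    rw [show ZA = ⇑ZAhom from rfl, map_finsuppSum]
    refine Finsupp.sum_congr fun v _ => ?_
    rw [map_finsuppSum]
    refine Finsupp.sum_congr fun u _ => ?_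
    show ZA _ = _
    rw [ZA_smul, ZA_harmW, ratA_mul]
    ring
  rw [e1]
  conv_rhs => rw [ZA, ZA]
  rw [Finsupp.sum_mul]
  refine Finsupp.sum_congr fun v _ => ?_
  rw [Finsupp.mul_sum]
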